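/- Let n ≥ 2 and k ≥ 2 be integers and b ≥ 13/2 a real number. Let p ∈ ℝ[x_0,…,x_n] be p = b²·x_0² + ∑_{i=1}^n x_i² + b·∑_{0≤i<j≤n} x_i x_j. Let S ⊆ ℕ^{n+1} be a finite M-convex set all of whose elements have coordinate sum k and which contains the exponent vectors of the six monomials x_1^k, x_1^{k−1}x_0, x_1^{k−1}x_2, x_1^{k−2}x_0², x_1^{k−2}x_0x_2, x_1^{k−2}x_2², and set q_S = ∑_{μ∈S} x^μ. Then p and q_S are both ADLC, but p·q_S is not ADLC: the coefficients of x_1^k x_0², x_1^k x_0 x_2, and x_1^k x_2² in p·q_S equal b²+b+1, 3b+1, and b+2 respectively, and (3b+1)² < (b+2)·(b²+b+1). -/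

import Mathlib

open Finset MvPolynomial

/-- The coefficient of a polynomial at an integer exponent vector: the usual
coefficient if all coordinates are nonnegative, and `0` otherwise. -/
noncomputable def coeffZ {m : ℕ} (h : MvPolynomial (Fin m) ℝ) (mu : Fin m → ℤ) : ℝ :=
  if H : ∀ k, 0 ≤ mu k then
    h.coeff (Finsupp.equivFunOnFinite.symm fun k => (mu k).toNat)
  else 0

/-- A polynomial is discretely log-concave in type `A` root directions (ADLC)
if `c_μ² ≥ c_{μ+e_i-e_j} · c_{μ-e_i+e_j}` for all `μ ∈ ℕ^m` and `i, j`, where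
coefficients indexed outside `ℕ^m` are read as `0`. -/
noncomputable def ADLC {m : ℕ} (h : MvPolynomial (Fin m) ℝ) : Prop :=
  ∀ (mu : Fin m → ℕ) (i j : Fin m),
    coeffZ h ((fun k => (mu k : ℤ)) + Pi.single i 1 - Pi.single j 1) *
        coeffZ h ((fun k => (mu k : ℤ)) - Pi.single i 1 + Pi.single j 1)
      ≤ h.coeff (Finsupp.equivFunOnFinite.symm mu) ^ 2

/-- `S ⊆ ℕ^m` is M-convex if for all `α ≠ β` in `S` and every `i` with
`α_i > β_i`, there is `j` with `α_j < β_j` and `α - e_i + e_j ∈ S`. -/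
def MConvex {m : ℕ} (S : Finset (Fin m →₀ ℕ)) : Prop :=
  ∀ a ∈ S, ∀ b ∈ S, a ≠ b → ∀ i : Fin m, b i < a i →
    ∃ j : Fin m, a j < b j ∧ a - Finsupp.single i 1 + Finsupp.single j 1 ∈ S

/-! ### basic helpers -/

lemma coeffZ_eq_coeff {m : ℕ} (h : MvPolynomial (Fin m) ℝ) (mu : Fin m → ℤ)
    (ν : Fin m →₀ ℕ) (hh : ∀ l, mu l = (ν l : ℤ)) : coeffZ h mu = h.coeff ν := by
  have h0 : ∀ l, 0 ≤ mu l := fun l => by rw [hh l]; positivity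
  rw [coeffZ, dif_pos h0]
  congr 1
  ext l
  simp [hh l]

lemma coeffZ_neg {m : ℕ} (h : MvPolynomial (Fin m) ℝ) (mu : Fin m → ℤ)
    (l : Fin m) (hl : mu l < 0) : coeffZ h mu = 0 := by
  rw [coeffZ, dif_neg]
  push_neg
  exact ⟨l, hl⟩

lemma coeff_qAux {m : ℕ} (S : Finset (Fin m →₀ ℕ)) (ν : Fin m →₀ ℕ) :
    (∑ mu ∈ S, monomial mu (1 : ℝ)).coeff ν = if ν ∈ S then 1 else 0 := by
  rw [coeff_sum]
  simp [coeff_monomial]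

lemma pair_ne_single2 {N : ℕ} (q1 q2 c : Fin N) (h : q1 ≠ q2) :
    Finsupp.single q1 1 + Finsupp.single q2 1 ≠ (Finsupp.single c 2 : Fin N →₀ ℕ) := by
  intro he
  have h1 := DFunLike.congr_fun he q1
  simp [Finsupp.single_apply, Finsupp.add_apply, h.symm] at h1
  split_ifs at h1 <;> omega

lemma single2_eq_iff {N : ℕ} (a c : Fin N) :
    (Finsupp.single a 2 : Fin N →₀ ℕ) = Finsupp.single c 2 ↔ a = c := by
  constructor
  · intro h
    by_contra hac
    have h1 := DFunLike.congr_fun h a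
    simp [Finsupp.single_apply, Ne.symm hac] at h1
  · rintro rfl; rfl

/-! ### the polynomial p -/

noncomputable def pAux (n : ℕ) (b : ℝ) : MvPolynomial (Fin (n + 1)) ℝ :=
  C (b ^ 2) * X 0 ^ 2 + (∑ i : Fin n, X i.succ ^ 2) +
    C b * ∑ q ∈ Finset.univ.filter
      (fun q : Fin (n + 1) × Fin (n + 1) => q.1 < q.2), X q.1 * X q.2

lemma pAux_eq (n : ℕ) (b : ℝ) : pAux n b =
    monomial (Finsupp.single 0 2) (b ^ 2)
    + (∑ i : Fin n, monomial (Finsupp.single i.succ 2) (1 : ℝ))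
    + ∑ q ∈ Finset.univ.filter
        (fun q : Fin (n + 1) × Fin (n + 1) => q.1 < q.2),
        monomial (Finsupp.single q.1 1 + Finsupp.single q.2 1) b := by
  have hXX : ∀ a c : Fin (n + 1), (X a * X c : MvPolynomial (Fin (n + 1)) ℝ)
      = monomial (Finsupp.single a 1 + Finsupp.single c 1) 1 := fun a c => by
    rw [← pow_one (X a (R := ℝ)), ← pow_one (X c (R := ℝ)), X_pow_eq_monomial,
      X_pow_eq_monomial, monomial_mul, one_mul]
  rw [pAux, Finset.mul_sum]
  congr 1
  · congr 1
    · rw [X_pow_eq_monomial, C_mul_monomial, mul_one]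
    · exact Finset.sum_congr rfl fun i _ => X_pow_eq_monomial
  · exact Finset.sum_congr rfl fun q _ => by rw [hXX, C_mul_monomial, mul_one]

lemma coeff_pAux (n : ℕ) (b : ℝ) (d : Fin (n + 1) →₀ ℕ) :
    (pAux n b).coeff d =
      (if Finsupp.single 0 2 = d then b ^ 2 else 0)
      + (∑ i : Fin n, if Finsupp.single i.succ 2 = d then (1 : ℝ) else 0)
      + ∑ q ∈ Finset.univ.filter
          (fun q : Fin (n + 1) × Fin (n + 1) => q.1 < q.2),
          (if Finsupp.single q.1 1 + Finsupp.single q.2 1 = d then b else 0) := by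
  rw [pAux_eq]
  simp only [coeff_add, MvPolynomial.coeff_sum, coeff_monomial]

lemma coeff_pAux_mul (n : ℕ) (b : ℝ) (f : MvPolynomial (Fin (n + 1)) ℝ)
    (d : Fin (n + 1) →₀ ℕ) :
    (pAux n b * f).coeff d =
      (if Finsupp.single 0 2 ≤ d then b ^ 2 * f.coeff (d - Finsupp.single 0 2) else 0)
      + (∑ i : Fin n, if Finsupp.single i.succ 2 ≤ d then
          f.coeff (d - Finsupp.single i.succ 2) else 0)
      + ∑ q ∈ Finset.univ.filter
          (fun q : Fin (n + 1) × Fin (n + 1) => q.1 < q.2),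
          (if Finsupp.single q.1 1 + Finsupp.single q.2 1 ≤ d then
            b * f.coeff (d - (Finsupp.single q.1 1 + Finsupp.single q.2 1)) else 0) := by
  rw [pAux_eq, add_mul, add_mul, Finset.sum_mul, Finset.sum_mul, coeff_add, coeff_add,
    MvPolynomial.coeff_sum, MvPolynomial.coeff_sum]
  simp only [coeff_monomial_mul', one_mul]

lemma coeff_pAux_single (n : ℕ) (b : ℝ) (c : Fin (n + 1)) :
    (pAux n b).coeff (Finsupp.single c 2) = if c = 0 then b ^ 2 else 1 := by
  rw [coeff_pAux]
  by_cases hc : c = 0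
  · subst hc
    rw [if_pos rfl, if_pos rfl, Finset.sum_eq_zero, Finset.sum_eq_zero, add_zero, add_zero]
    · intro q hq
      rw [if_neg (pair_ne_single2 q.1 q.2 0 (ne_of_lt (Finset.mem_filter.mp hq).2))]
    · intro i _
      rw [if_neg]
      intro h
      exact Fin.succ_ne_zero i ((single2_eq_iff _ _).mp h)
  · rw [if_neg fun h => hc ((single2_eq_iff _ _).mp h).symm, if_neg hc]
    obtain ⟨i₀, rfl⟩ := Fin.eq_succ_of_ne_zero hc
    rw [Finset.sum_eq_zero (fun q hq =>
      if_neg (pair_ne_single2 q.1 q.2 _ (ne_of_lt (Finset.mem_filter.mp hq).2))),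
      add_zero, Finset.sum_eq_single i₀]
    · rw [if_pos rfl, zero_add]
    · intro i _ hii
      rw [if_neg]
      intro h
      exact hii (Fin.succ_injective _ ((single2_eq_iff _ _).mp h))
    · intro h
      exact absurd (Finset.mem_univ i₀) h

lemma pair_mem_iff {N : ℕ} (q1 q2 l l' : Fin N) (hq : q1 ≠ q2) (he :
    Finsupp.single q1 1 + Finsupp.single q2 1
      = (Finsupp.single l 1 + Finsupp.single l' 1 : Fin N →₀ ℕ)) :
    q1 = l ∨ q1 = l' := by
  by_contra hcon
  push_neg at hcon
  have h1 := DFunLike.congr_fun he q1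
  have f1 : ¬ q2 = q1 := fun hh => hq hh.symm
  have f2 : ¬ l = q1 := fun hh => hcon.1 hh.symm
  have f3 : ¬ l' = q1 := fun hh => hcon.2 hh.symm
  simp [Finsupp.add_apply, Finsupp.single_apply, f1, f2, f3] at h1

lemma coeff_pAux_pair_lt (n : ℕ) (b : ℝ) (l l' : Fin (n + 1)) (h : l < l') :
    (pAux n b).coeff (Finsupp.single l 1 + Finsupp.single l' 1) = b := by
  have hne : l ≠ l' := ne_of_lt h
  rw [coeff_pAux]
  rw [if_neg fun he => pair_ne_single2 l l' 0 hne he.symm]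
  rw [Finset.sum_eq_zero (fun i (_ : i ∈ Finset.univ) =>
    if_neg fun he => pair_ne_single2 l l' i.succ hne he.symm), add_zero, zero_add]
  rw [Finset.sum_eq_single (l, l')]
  · rw [if_pos rfl]
  · rintro ⟨q1, q2⟩ hq hqne
    have hq12 : q1 < q2 := (Finset.mem_filter.mp hq).2
    rw [if_neg]
    intro he
    have hb1 : q1 = l ∨ q1 = l' := pair_mem_iff q1 q2 l l' (ne_of_lt hq12) he
    have hb2 : q2 = l ∨ q2 = l' := by
      exact pair_mem_iff q2 q1 l l' (ne_of_gt hq12) ((add_comm _ _).trans he)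
    rcases hb1 with rfl | rfl
    · rcases hb2 with rfl | rfl
      · exact (ne_of_lt hq12) rfl
      · exact hqne rfl
    · rcases hb2 with rfl | rfl
      · exact absurd hq12 (lt_asymm h)
      · exact (ne_of_lt hq12) rfl
  · intro hmm
    exact absurd (Finset.mem_filter.mpr ⟨Finset.mem_univ ((l, l') : Fin (n+1) × Fin (n+1)), h⟩) hmm

lemma coeff_pAux_pair (n : ℕ) (b : ℝ) (l l' : Fin (n + 1)) (h : l ≠ l') :
    (pAux n b).coeff (Finsupp.single l 1 + Finsupp.single l' 1) = b := by
  rcases lt_or_gt_of_ne h with hlt | hlt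
  · exact coeff_pAux_pair_lt n b l l' hlt
  · rw [show Finsupp.single l 1 + Finsupp.single l' 1
        = Finsupp.single l' 1 + Finsupp.single l 1 from add_comm _ _]
    exact coeff_pAux_pair_lt n b l' l hlt

/-! ### ADLC of qS -/

lemma diag_case {m : ℕ} (h : MvPolynomial (Fin m) ℝ) (mu : Fin m → ℕ) (i : Fin m) :
    coeffZ h ((fun k => (mu k : ℤ)) + Pi.single i 1 - Pi.single i 1) *
      coeffZ h ((fun k => (mu k : ℤ)) - Pi.single i 1 + Pi.single i 1)
      ≤ h.coeff (Finsupp.equivFunOnFinite.symm mu) ^ 2 := by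
  have e1 : ((fun k => (mu k : ℤ)) + Pi.single i 1 - Pi.single i 1) = fun k => (mu k : ℤ) := by
    funext l; simp
  have e2 : ((fun k => (mu k : ℤ)) - Pi.single i 1 + Pi.single i 1) = fun k => (mu k : ℤ) := by
    funext l; simp
  rw [e1, e2, coeffZ_eq_coeff h _ (Finsupp.equivFunOnFinite.symm mu) (fun l => by simp), sq]

lemma ADLC_qAux {m : ℕ} (S : Finset (Fin m →₀ ℕ)) (hM : MConvex S) :
    ADLC (∑ mu ∈ S, monomial mu (1 : ℝ)) := by
  intro mu i j
  by_cases hij : i = j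
  · subst hij; exact diag_case _ mu i
  have hij' : ¬ j = i := fun hh => hij hh.symm
  by_cases hmuj : 1 ≤ mu j
  swap
  · have hneg : ((fun k => (mu k : ℤ)) + Pi.single i 1 - Pi.single j 1 : Fin m → ℤ) j < 0 := by
      simp only [Pi.add_apply, Pi.sub_apply, Pi.single_apply]
      rw [if_neg hij']
      simp only [if_true]
      omega
    rw [coeffZ_neg _ _ j hneg, zero_mul]
    exact sq_nonneg _
  by_cases hmui : 1 ≤ mu i
  swap
  · have hneg : ((fun k => (mu k : ℤ)) - Pi.single i 1 + Pi.single j 1 : Fin m → ℤ) i < 0 := by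
      simp only [Pi.add_apply, Pi.sub_apply, Pi.single_apply]
      rw [if_neg hij]
      simp only [if_true]
      omega
    rw [coeffZ_neg _ _ i hneg, mul_zero]
    exact sq_nonneg _
  set νmu := Finsupp.equivFunOnFinite.symm mu with hνmu
  have hνmuv : ∀ l, νmu l = mu l := fun l => by simp [hνmu]
  set να := νmu + Finsupp.single i 1 - Finsupp.single j 1 with hνα
  set νβ := νmu - Finsupp.single i 1 + Finsupp.single j 1 with hνβ
  have hναv : ∀ l, να l = mu l + (if i = l then 1 else 0) - (if j = l then 1 else 0) := by
    intro l
    rw [hνα, Finsupp.tsub_apply, Finsupp.add_apply, Finsupp.single_apply,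
      Finsupp.single_apply, hνmuv l]
  have hνβv : ∀ l, νβ l = mu l - (if i = l then 1 else 0) + (if j = l then 1 else 0) := by
    intro l
    rw [hνβ, Finsupp.add_apply, Finsupp.tsub_apply, Finsupp.single_apply,
      Finsupp.single_apply, hνmuv l]
  have hcoordA : ∀ l, ((fun k => (mu k : ℤ)) + Pi.single i 1 - Pi.single j 1 : Fin m → ℤ) l
      = (να l : ℤ) := by
    intro l
    simp only [Pi.add_apply, Pi.sub_apply, Pi.single_apply]
    rw [hναv l]
    by_cases hli : l = i
    · have hil : i = l := hli.symm
      have hlj : ¬ l = j := fun hh => hij (hli.symm.trans hh)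
      have hjl : ¬ j = l := fun hh => hlj hh.symm
      rw [if_pos hli, if_pos hil, if_neg hlj, if_neg hjl]
      omega
    · have hil : ¬ i = l := fun hh => hli hh.symm
      by_cases hlj : l = j
      · have hjl : j = l := hlj.symm
        rw [if_neg hli, if_neg hil, if_pos hlj, if_pos hjl]
        have hml : 1 ≤ mu l := by rw [hlj]; exact hmuj
        omega
      · have hjl : ¬ j = l := fun hh => hlj hh.symm
        rw [if_neg hli, if_neg hil, if_neg hlj, if_neg hjl]
        omega
  have hcoordB : ∀ l, ((fun k => (mu k : ℤ)) - Pi.single i 1 + Pi.single j 1 : Fin m → ℤ) l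
      = (νβ l : ℤ) := by
    intro l
    simp only [Pi.add_apply, Pi.sub_apply, Pi.single_apply]
    rw [hνβv l]
    by_cases hli : l = i
    · have hil : i = l := hli.symm
      have hlj : ¬ l = j := fun hh => hij (hli.symm.trans hh)
      have hjl : ¬ j = l := fun hh => hlj hh.symm
      rw [if_pos hli, if_pos hil, if_neg hlj, if_neg hjl]
      have hml : 1 ≤ mu l := by rw [hli]; exact hmui
      omega
    · have hil : ¬ i = l := fun hh => hli hh.symm
      by_cases hlj : l = j
      · have hjl : j = l := hlj.symm
        rw [if_neg hli, if_neg hil, if_pos hlj, if_pos hjl]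
        omega
      · have hjl : ¬ j = l := fun hh => hlj hh.symm
        rw [if_neg hli, if_neg hil, if_neg hlj, if_neg hjl]
        omega
  rw [coeffZ_eq_coeff _ _ να hcoordA, coeffZ_eq_coeff _ _ νβ hcoordB,
    coeff_qAux, coeff_qAux, coeff_qAux]
  by_cases hain : να ∈ S
  swap
  · rw [if_neg hain, zero_mul]; exact sq_nonneg _
  by_cases hbin : νβ ∈ S
  swap
  · rw [if_neg hbin, mul_zero]; exact sq_nonneg _
  have e1 : να i = mu i + 1 := by
    rw [hναv i, if_neg hij']
    simp
  have e2 : νβ i = mu i - 1 := by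
    rw [hνβv i, if_neg hij']
    simp
  have hane : να ≠ νβ := by
    intro hh
    have h2 := DFunLike.congr_fun hh i
    rw [e1, e2] at h2
    omega
  have hlt : νβ i < να i := by
    rw [e1, e2]
    omega
  obtain ⟨j', hj'lt, hj'mem⟩ := hM να hain νβ hbin hane i hlt
  have hj'j : j' = j := by
    by_contra hjj
    have hjj' : ¬ j = j' := fun hh => hjj hh.symm
    rw [hναv j', hνβv j', if_neg hjj'] at hj'lt
    by_cases hij2 : i = j'
    · rw [if_pos hij2] at hj'lt
      omega
    · rw [if_neg hij2] at hj'lt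
      omega
  have hrec : να - Finsupp.single i 1 + Finsupp.single j 1 = νmu := by
    ext l
    rw [Finsupp.add_apply, Finsupp.tsub_apply, hναv l, Finsupp.single_apply,
      Finsupp.single_apply, hνmuv l]
    by_cases hil : i = l
    · have hjl : ¬ j = l := fun hh => hij (hil.trans hh.symm)
      rw [if_pos hil, if_neg hjl]
      omega
    · by_cases hjl : j = l
      · rw [if_neg hil, if_pos hjl]
        have hml : 1 ≤ mu l := by rw [← hjl]; exact hmuj
        omega
      · rw [if_neg hil, if_neg hjl]
        omega
  rw [hj'j, hrec] at hj'mem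
  rw [if_pos hain, if_pos hbin, if_pos hj'mem]
  norm_num

/-! ### ADLC of p -/

lemma coeffZ_pAux_shift (n : ℕ) (b : ℝ) (mu : Fin (n + 1) → ℕ) (i j : Fin (n + 1))
    (hij : ¬ i = j) (hmui : 1 ≤ mu i)
    (hne : ¬ ∀ l, mu l = ((Finsupp.single i 1 + Finsupp.single j 1 : Fin (n + 1) →₀ ℕ) l)) :
    coeffZ (pAux n b) ((fun k => (mu k : ℤ)) + Pi.single i 1 - Pi.single j 1) = 0 := by
  have hij' : ¬ j = i := fun hh => hij hh.symm
  by_cases hmuj : 1 ≤ mu j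
  swap
  · refine coeffZ_neg _ _ j ?_
    simp only [Pi.add_apply, Pi.sub_apply, Pi.single_apply]
    rw [if_neg hij']
    simp only [if_true]
    omega
  set νmu := Finsupp.equivFunOnFinite.symm mu with hνmu
  have hνmuv : ∀ l, νmu l = mu l := fun l => by simp [hνmu]
  set ν := νmu + Finsupp.single i 1 - Finsupp.single j 1 with hν
  have hνv : ∀ l, ν l = mu l + (if i = l then 1 else 0) - (if j = l then 1 else 0) := by
    intro l
    rw [hν, Finsupp.tsub_apply, Finsupp.add_apply, Finsupp.single_apply,
      Finsupp.single_apply, hνmuv l]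
  have hcoord : ∀ l, ((fun k => (mu k : ℤ)) + Pi.single i 1 - Pi.single j 1
      : Fin (n + 1) → ℤ) l = (ν l : ℤ) := by
    intro l
    simp only [Pi.add_apply, Pi.sub_apply, Pi.single_apply]
    rw [hνv l]
    by_cases hli : l = i
    · have hil : i = l := hli.symm
      have hlj : ¬ l = j := fun hh => hij (hli.symm.trans hh)
      have hjl : ¬ j = l := fun hh => hlj hh.symm
      rw [if_pos hli, if_pos hil, if_neg hlj, if_neg hjl]
      omega
    · have hil : ¬ i = l := fun hh => hli hh.symm
      by_cases hlj : l = j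
      · have hjl : j = l := hlj.symm
        rw [if_neg hli, if_neg hil, if_pos hlj, if_pos hjl]
        have hml : 1 ≤ mu l := by rw [hlj]; exact hmuj
        omega
      · have hjl : ¬ j = l := fun hh => hlj hh.symm
        rw [if_neg hli, if_neg hil, if_neg hlj, if_neg hjl]
        omega
  have hνi : ν i = mu i + 1 := by
    rw [hνv i, if_neg hij']
    simp
  have key : ∀ c : Fin (n + 1), ¬ (Finsupp.single c 2 : Fin (n + 1) →₀ ℕ) = ν := by
    intro c hc
    have hci : c = i := by
      by_contra hci
      have h2 := DFunLike.congr_fun hc i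
      rw [Finsupp.single_apply, if_neg hci, hνi] at h2
      omega
    subst hci
    apply hne
    intro l
    have h2 := DFunLike.congr_fun hc l
    rw [Finsupp.single_apply, hνv l] at h2
    rw [Finsupp.add_apply, Finsupp.single_apply, Finsupp.single_apply]
    by_cases hil : c = l
    · have hjl : ¬ j = l := fun hh => hij (hil.trans hh.symm)
      simp only [if_pos hil, if_neg hjl] at h2 ⊢
      omega
    · by_cases hjl : j = l
      · simp only [if_neg hil, if_pos hjl] at h2 ⊢
        have hml : 1 ≤ mu l := by rw [← hjl]; exact hmuj
        omega
      · simp only [if_neg hil, if_neg hjl] at h2 ⊢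
        omega
  rw [coeffZ_eq_coeff _ _ ν hcoord, coeff_pAux, if_neg (key 0),
    Finset.sum_eq_zero (fun i' (_ : i' ∈ Finset.univ) => if_neg (key i'.succ)),
    Finset.sum_eq_zero]
  · norm_num
  · intro q hq
    rw [if_neg]
    intro he
    have hq12 : q.1 < q.2 := (Finset.mem_filter.mp hq).2
    have h2 := DFunLike.congr_fun he i
    rw [Finsupp.add_apply, Finsupp.single_apply, Finsupp.single_apply, hνi] at h2
    by_cases h1 : q.1 = i
    · by_cases h3 : q.2 = i
      · exact (ne_of_lt hq12) (h1.trans h3.symm)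
      · rw [if_pos h1, if_neg h3] at h2
        omega
    · by_cases h3 : q.2 = i
      · rw [if_neg h1, if_pos h3] at h2
        omega
      · rw [if_neg h1, if_neg h3] at h2
        omega

lemma ADLC_pAux (n : ℕ) (b : ℝ) (hb : 1 ≤ b) : ADLC (pAux n b) := by
  intro mu i j
  by_cases hij : i = j
  · subst hij; exact diag_case _ mu i
  have hij' : ¬ j = i := fun hh => hij hh.symm
  by_cases hmui : 1 ≤ mu i
  swap
  · have hneg : ((fun k => (mu k : ℤ)) - Pi.single i 1 + Pi.single j 1 : Fin (n + 1) → ℤ) i < 0 := by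
      simp only [Pi.add_apply, Pi.sub_apply, Pi.single_apply]
      rw [if_neg hij]
      simp only [if_true]
      omega
    rw [coeffZ_neg _ _ i hneg, mul_zero]
    exact sq_nonneg _
  by_cases hmu : ∀ l, mu l = ((Finsupp.single i 1 + Finsupp.single j 1 : Fin (n + 1) →₀ ℕ) l)
  swap
  · rw [coeffZ_pAux_shift n b mu i j hij hmui hmu, zero_mul]
    exact sq_nonneg _
  have hmui1 : mu i = 1 := by
    simpa [Finsupp.add_apply, Finsupp.single_apply, hij'] using hmu i
  have hmuj1 : mu j = 1 := by
    simpa [Finsupp.add_apply, Finsupp.single_apply, hij] using hmu j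
  have hmu0 : ∀ l, ¬ i = l → ¬ j = l → mu l = 0 := by
    intro l f1 f2
    simpa [Finsupp.add_apply, Finsupp.single_apply, f1, f2] using hmu l
  have hcA : ∀ l, ((fun k => (mu k : ℤ)) + Pi.single i 1 - Pi.single j 1
      : Fin (n + 1) → ℤ) l = (((Finsupp.single i 2 : Fin (n + 1) →₀ ℕ)) l : ℤ) := by
    intro l
    simp only [Pi.add_apply, Pi.sub_apply, Pi.single_apply, Finsupp.single_apply]
    by_cases hli : l = i
    · have hil : i = l := hli.symm
      have hlj : ¬ l = j := fun hh => hij (hli.symm.trans hh)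
      have hml : mu l = 1 := by rw [hli]; exact hmui1
      simp only [if_pos hli, if_pos hil, if_neg hlj]
      omega
    · have hil : ¬ i = l := fun hh => hli hh.symm
      by_cases hlj : l = j
      · have hml : mu l = 1 := by rw [hlj]; exact hmuj1
        simp only [if_neg hli, if_neg hil, if_pos hlj]
        omega
      · have hml : mu l = 0 := hmu0 l hil (fun hh => hlj hh.symm)
        simp only [if_neg hli, if_neg hil, if_neg hlj]
        omega
  have hcB : ∀ l, ((fun k => (mu k : ℤ)) - Pi.single i 1 + Pi.single j 1
      : Fin (n + 1) → ℤ) l = (((Finsupp.single j 2 : Fin (n + 1) →₀ ℕ)) l : ℤ) := by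
    intro l
    simp only [Pi.add_apply, Pi.sub_apply, Pi.single_apply, Finsupp.single_apply]
    by_cases hli : l = i
    · have hjl : ¬ j = l := fun hh => hij' (hh.trans hli)
      have hlj : ¬ l = j := fun hh => hjl hh.symm
      have hml : mu l = 1 := by rw [hli]; exact hmui1
      simp only [if_pos hli, if_neg hlj, if_neg hjl]
      omega
    · by_cases hlj : l = j
      · have hjl : j = l := hlj.symm
        have hml : mu l = 1 := by rw [hlj]; exact hmuj1
        simp only [if_neg hli, if_pos hlj, if_pos hjl]
        omega
      · have hjl : ¬ j = l := fun hh => hlj hh.symm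
        have hml : mu l = 0 := hmu0 l (fun hh => hli hh.symm) hjl
        simp only [if_neg hli, if_neg hlj, if_neg hjl]
        omega
  have hνmu : Finsupp.equivFunOnFinite.symm mu
      = Finsupp.single i 1 + Finsupp.single j 1 := by
    ext l
    rw [show (Finsupp.equivFunOnFinite.symm mu) l = mu l from rfl]
    exact hmu l
  rw [coeffZ_eq_coeff _ _ _ hcA, coeffZ_eq_coeff _ _ _ hcB, hνmu,
    coeff_pAux_single, coeff_pAux_single, coeff_pAux_pair n b i j hij]
  by_cases hi0 : i = 0
  · have hj0 : ¬ j = 0 := fun hh => hij (hi0.trans hh.symm)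
    rw [if_pos hi0, if_neg hj0, mul_one]
  · by_cases hj0 : j = 0
    · rw [if_neg hi0, if_pos hj0, one_mul]
    · rw [if_neg hi0, if_neg hj0, mul_one]
      nlinarith

/-! ### Fin facts -/

lemma n01 (m : ℕ) : ¬ (0 : Fin (m+3)) = 1 := by simp [Fin.ext_iff]
lemma n02 (m : ℕ) : ¬ (0 : Fin (m+3)) = 2 := by simp [Fin.ext_iff, Nat.mod_eq_of_lt (show 2 < m + 3 by omega)]
lemma n12 (m : ℕ) : ¬ (1 : Fin (m+3)) = 2 := by simp [Fin.ext_iff, Nat.mod_eq_of_lt (show 2 < m + 3 by omega)]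
lemma n10 (m : ℕ) : ¬ (1 : Fin (m+3)) = 0 := fun h => n01 m h.symm
lemma n20 (m : ℕ) : ¬ (2 : Fin (m+3)) = 0 := fun h => n02 m h.symm
lemma n21 (m : ℕ) : ¬ (2 : Fin (m+3)) = 1 := fun h => n12 m h.symm
lemma lt01 (m : ℕ) : (0 : Fin (m+3)) < 1 := by simp [Fin.lt_def]
lemma lt02 (m : ℕ) : (0 : Fin (m+3)) < 2 := by simp [Fin.lt_def, Nat.mod_eq_of_lt (show 2 < m + 3 by omega)]
lemma lt12 (m : ℕ) : (1 : Fin (m+3)) < 2 := by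
  rw [Fin.lt_def]
  have a : ((1 : Fin (m+3)) : ℕ) = 1 := Fin.val_one _
  have c : ((2 : Fin (m+3)) : ℕ) = 2 := @Fin.val_two (m+1)
  omega
lemma s0 (m : ℕ) : (0 : Fin (m+2)).succ = (1 : Fin (m+3)) := by
  apply Fin.ext
  simp
lemma s1 (m : ℕ) : (1 : Fin (m+2)).succ = (2 : Fin (m+3)) := by
  apply Fin.ext
  have a : ((1 : Fin (m+2)) : ℕ) = 1 := Fin.val_one _
  have c : ((2 : Fin (m+3)) : ℕ) = 2 := @Fin.val_two (m+1)
  rw [Fin.val_succ, a, c]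
lemma nlt10 (m : ℕ) : ¬ (1 : Fin (m+3)) < 0 := by
  rw [Fin.lt_def]
  simp
lemma nlt20 (m : ℕ) : ¬ (2 : Fin (m+3)) < 0 := by
  rw [Fin.lt_def]
  simp
lemma nlt21 (m : ℕ) : ¬ (2 : Fin (m+3)) < 1 := by
  rw [Fin.lt_def]
  have a : ((1 : Fin (m+3)) : ℕ) = 1 := Fin.val_one _
  have c : ((2 : Fin (m+3)) : ℕ) = 2 := @Fin.val_two (m+1)
  omega

lemma pair_le_both {N : ℕ} (a c : Fin N) (d : Fin N →₀ ℕ)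
    (hle : Finsupp.single a 1 + Finsupp.single c 1 ≤ d) : 1 ≤ d a ∧ 1 ≤ d c := by
  have h1 := Finsupp.le_def.mp hle a
  have h2 := Finsupp.le_def.mp hle c
  rw [Finsupp.add_apply, Finsupp.single_apply, Finsupp.single_apply] at h1 h2
  constructor
  · refine le_trans ?_ h1
    by_cases hca : c = a <;> simp [hca]
  · refine le_trans ?_ h2
    by_cases hac : a = c <;> simp [hac]

lemma pair_le_of {N : ℕ} (a c : Fin N) (hac : ¬ a = c) (d : Fin N →₀ ℕ)
    (h1 : 1 ≤ d a) (h2 : 1 ≤ d c) : Finsupp.single a 1 + Finsupp.single c 1 ≤ d := by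
  rw [Finsupp.le_def]
  intro l
  rw [Finsupp.add_apply, Finsupp.single_apply, Finsupp.single_apply]
  by_cases hal : a = l
  · have hcl : ¬ c = l := fun hh => hac (hal.trans hh.symm)
    rw [if_pos hal, if_neg hcl, ← hal]
    omega
  · by_cases hcl : c = l
    · rw [if_neg hal, if_pos hcl, ← hcl]
      omega
    · rw [if_neg hal, if_neg hcl]
      omega

/-! ### the first product coefficient -/

lemma coeff_prod_d1 (m k' : ℕ) (b : ℝ) (S : Finset (Fin (m+3) →₀ ℕ))
    (h1 : Finsupp.single (1 : Fin (m+3)) (k'+2) ∈ S)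
    (h2 : Finsupp.single (1 : Fin (m+3)) (k'+1) + Finsupp.single 0 1 ∈ S)
    (h4 : Finsupp.single (1 : Fin (m+3)) k' + Finsupp.single 0 2 ∈ S) :
    (pAux (m+2) b * ∑ mu ∈ S, monomial mu (1:ℝ)).coeff
      (Finsupp.single 1 (k'+2) + Finsupp.single 0 2) = b^2 + b + 1 := by
  set d : Fin (m+3) →₀ ℕ := Finsupp.single 1 (k'+2) + Finsupp.single 0 2 with hd
  have hdv : ∀ l, d l = (if (1 : Fin (m+3)) = l then k'+2 else 0)
      + (if (0 : Fin (m+3)) = l then 2 else 0) := by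
    intro l
    rw [hd, Finsupp.add_apply, Finsupp.single_apply, Finsupp.single_apply]
  have hd0 : d 0 = 2 := by rw [hdv 0, if_neg (n10 m)]; simp
  have hd1 : d 1 = k'+2 := by rw [hdv 1, if_neg (n01 m)]; simp
  have hdo : ∀ l, ¬ (0 : Fin (m+3)) = l → ¬ (1 : Fin (m+3)) = l → d l = 0 := by
    intro l f0 f1
    rw [hdv l, if_neg f1, if_neg f0]
  rw [coeff_pAux_mul]
  simp only [coeff_qAux]
  -- part 1
  have hsub1 : d - Finsupp.single 0 2 = Finsupp.single (1 : Fin (m+3)) (k'+2) := by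
    ext l
    simp only [Finsupp.tsub_apply, hdv, Finsupp.add_apply, Finsupp.single_apply]
    by_cases f0 : (0 : Fin (m+3)) = l
    · have f1 : ¬ (1 : Fin (m+3)) = l := fun hh => n01 m (f0.trans hh.symm)
      simp only [if_pos f0, if_neg f1]
      all_goals omega
    · by_cases f1 : (1 : Fin (m+3)) = l
      · simp only [if_neg f0, if_pos f1]
        all_goals omega
      · simp only [if_neg f0, if_neg f1]
        all_goals omega
  rw [if_pos (Finsupp.single_le_iff.mpr (le_of_eq hd0.symm)), hsub1, if_pos h1]
  -- part 2
  have hsub2 : d - Finsupp.single 1 2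
      = Finsupp.single (1 : Fin (m+3)) k' + Finsupp.single 0 2 := by
    ext l
    simp only [Finsupp.tsub_apply, hdv, Finsupp.add_apply, Finsupp.single_apply]
    by_cases f0 : (0 : Fin (m+3)) = l
    · have f1 : ¬ (1 : Fin (m+3)) = l := fun hh => n01 m (f0.trans hh.symm)
      simp only [if_pos f0, if_neg f1]
      all_goals omega
    · by_cases f1 : (1 : Fin (m+3)) = l
      · simp only [if_neg f0, if_pos f1]
        all_goals omega
      · simp only [if_neg f0, if_neg f1]
        all_goals omega
  rw [Finset.sum_eq_single (0 : Fin (m+2))]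
  rotate_left
  · intro i' _ hi'
    rw [if_neg]
    intro hle
    have hcoord := Finsupp.single_le_iff.mp hle
    have hz : d i'.succ = 0 := by
      refine hdo i'.succ (fun hh => Fin.succ_ne_zero i' hh.symm) (fun hh => hi' ?_)
      have h5 := hh.symm.trans (s0 m).symm
      exact Fin.succ_injective _ h5
    omega
  · intro hmm
    exact absurd (Finset.mem_univ _) hmm
  rw [s0 m, if_pos (Finsupp.single_le_iff.mpr (by rw [hd1]; omega)), hsub2, if_pos h4]
  -- part 3
  have hsub3 : d - (Finsupp.single 0 1 + Finsupp.single 1 1)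
      = Finsupp.single (1 : Fin (m+3)) (k'+1) + Finsupp.single 0 1 := by
    ext l
    simp only [Finsupp.tsub_apply, hdv, Finsupp.add_apply, Finsupp.single_apply]
    by_cases f0 : (0 : Fin (m+3)) = l
    · have f1 : ¬ (1 : Fin (m+3)) = l := fun hh => n01 m (f0.trans hh.symm)
      simp only [if_pos f0, if_neg f1]
      all_goals omega
    · by_cases f1 : (1 : Fin (m+3)) = l
      · simp only [if_neg f0, if_pos f1]
        all_goals omega
      · simp only [if_neg f0, if_neg f1]
        all_goals omega
  rw [Finset.sum_eq_single ((0 : Fin (m+3)), (1 : Fin (m+3)))]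
  rotate_left
  · rintro ⟨q1, q2⟩ hq hqne
    have hq12 : q1 < q2 := (Finset.mem_filter.mp hq).2
    rw [if_neg]
    intro hle
    obtain ⟨ha, hc⟩ := pair_le_both q1 q2 d hle
    have e1 : q1 = 0 ∨ q1 = 1 := by
      by_contra hq'
      push_neg at hq'
      rw [hdo q1 (fun hh => hq'.1 hh.symm) (fun hh => hq'.2 hh.symm)] at ha
      omega
    have e2 : q2 = 0 ∨ q2 = 1 := by
      by_contra hq'
      push_neg at hq'
      rw [hdo q2 (fun hh => hq'.1 hh.symm) (fun hh => hq'.2 hh.symm)] at hc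
      omega
    rcases e1 with rfl | rfl <;> rcases e2 with rfl | rfl
    · exact lt_irrefl _ hq12
    · exact hqne rfl
    · exact nlt10 m hq12
    · exact lt_irrefl _ hq12
  · intro hmm
    exact absurd (Finset.mem_filter.mpr
      ⟨Finset.mem_univ (((0 : Fin (m+3)), (1 : Fin (m+3))) : Fin (m+3) × Fin (m+3)),
        lt01 m⟩) hmm
  rw [if_pos (pair_le_of 0 1 (n01 m) d (by omega) (by omega)), hsub3, if_pos h2]
  ring

lemma coeff_prod_d2 (m k' : ℕ) (b : ℝ) (S : Finset (Fin (m+3) →₀ ℕ))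
    (h1 : Finsupp.single (1 : Fin (m+3)) (k'+2) ∈ S)
    (h2 : Finsupp.single (1 : Fin (m+3)) (k'+1) + Finsupp.single 0 1 ∈ S)
    (h3 : Finsupp.single (1 : Fin (m+3)) (k'+1) + Finsupp.single 2 1 ∈ S)
    (h5 : Finsupp.single (1 : Fin (m+3)) k' + Finsupp.single 0 1 + Finsupp.single 2 1 ∈ S) :
    (pAux (m+2) b * ∑ mu ∈ S, monomial mu (1:ℝ)).coeff
      (Finsupp.single 1 (k'+2) + Finsupp.single 0 1 + Finsupp.single 2 1) = 3*b + 1 := by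
  set d : Fin (m+3) →₀ ℕ :=
    Finsupp.single 1 (k'+2) + Finsupp.single 0 1 + Finsupp.single 2 1 with hd
  have hdv : ∀ l, d l = ((if (1 : Fin (m+3)) = l then k'+2 else 0)
      + (if (0 : Fin (m+3)) = l then 1 else 0))
      + (if (2 : Fin (m+3)) = l then 1 else 0) := by
    intro l
    rw [hd, Finsupp.add_apply, Finsupp.add_apply, Finsupp.single_apply,
      Finsupp.single_apply, Finsupp.single_apply]
  have hd0 : d 0 = 1 := by
    rw [hdv 0, if_neg (n10 m), if_neg (n20 m)]
    simp
  have hd1 : d 1 = k'+2 := by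
    rw [hdv 1, if_neg (n01 m), if_neg (n21 m)]
    simp
  have hd2 : d 2 = 1 := by
    rw [hdv 2, if_neg (n12 m), if_neg (n02 m)]
    simp
  have hdo : ∀ l, ¬ (0 : Fin (m+3)) = l → ¬ (1 : Fin (m+3)) = l →
      ¬ (2 : Fin (m+3)) = l → d l = 0 := by
    intro l f0 f1 f2
    rw [hdv l, if_neg f1, if_neg f0, if_neg f2]
  rw [coeff_pAux_mul]
  simp only [coeff_qAux]
  -- part 1 : zero
  rw [if_neg (fun hle => by
    have h6 := Finsupp.single_le_iff.mp hle
    rw [hd0] at h6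
    omega)]
  -- part 2
  have hsub2 : d - Finsupp.single 1 2
      = Finsupp.single (1 : Fin (m+3)) k' + Finsupp.single 0 1 + Finsupp.single 2 1 := by
    ext l
    simp only [Finsupp.tsub_apply, hdv, Finsupp.add_apply, Finsupp.single_apply]
    by_cases f0 : (0 : Fin (m+3)) = l
    · have f1 : ¬ (1 : Fin (m+3)) = l := fun hh => n01 m (f0.trans hh.symm)
      have f2 : ¬ (2 : Fin (m+3)) = l := fun hh => n02 m (f0.trans hh.symm)
      simp only [if_pos f0, if_neg f1, if_neg f2]
      all_goals omega
    · by_cases f1 : (1 : Fin (m+3)) = l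
      · have f2 : ¬ (2 : Fin (m+3)) = l := fun hh => n12 m (f1.trans hh.symm)
        simp only [if_neg f0, if_pos f1, if_neg f2]
        all_goals omega
      · by_cases f2 : (2 : Fin (m+3)) = l
        · simp only [if_neg f0, if_neg f1, if_pos f2]
          all_goals omega
        · simp only [if_neg f0, if_neg f1, if_neg f2]
          all_goals omega
  rw [Finset.sum_eq_single (0 : Fin (m+2))]
  rotate_left
  · intro i' _ hi'
    rw [if_neg]
    intro hle
    have hcoord := Finsupp.single_le_iff.mp hle
    have f0 : ¬ (0 : Fin (m+3)) = i'.succ := fun hh => Fin.succ_ne_zero i' hh.symm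
    have f1 : ¬ (1 : Fin (m+3)) = i'.succ := fun hh =>
      hi' (Fin.succ_injective _ (hh.symm.trans (s0 m).symm))
    have hle1 : d i'.succ ≤ 1 := by
      rw [hdv i'.succ, if_neg f1, if_neg f0]
      by_cases f2 : (2 : Fin (m+3)) = i'.succ
      · rw [if_pos f2]
      · rw [if_neg f2]
        omega
    omega
  · intro hmm
    exact absurd (Finset.mem_univ _) hmm
  rw [s0 m, if_pos (Finsupp.single_le_iff.mpr (by rw [hd1]; omega)), hsub2, if_pos h5]
  -- part 3
  have hsubA : d - (Finsupp.single 0 1 + Finsupp.single 1 1)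
      = Finsupp.single (1 : Fin (m+3)) (k'+1) + Finsupp.single 2 1 := by
    ext l
    simp only [Finsupp.tsub_apply, hdv, Finsupp.add_apply, Finsupp.single_apply]
    by_cases f0 : (0 : Fin (m+3)) = l
    · have f1 : ¬ (1 : Fin (m+3)) = l := fun hh => n01 m (f0.trans hh.symm)
      have f2 : ¬ (2 : Fin (m+3)) = l := fun hh => n02 m (f0.trans hh.symm)
      simp only [if_pos f0, if_neg f1, if_neg f2]
      all_goals omega
    · by_cases f1 : (1 : Fin (m+3)) = l
      · have f2 : ¬ (2 : Fin (m+3)) = l := fun hh => n12 m (f1.trans hh.symm)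
        simp only [if_neg f0, if_pos f1, if_neg f2]
        all_goals omega
      · by_cases f2 : (2 : Fin (m+3)) = l
        · simp only [if_neg f0, if_neg f1, if_pos f2]
          all_goals omega
        · simp only [if_neg f0, if_neg f1, if_neg f2]
          all_goals omega
  have hsubB : d - (Finsupp.single 0 1 + Finsupp.single 2 1)
      = Finsupp.single (1 : Fin (m+3)) (k'+2) := by
    ext l
    simp only [Finsupp.tsub_apply, hdv, Finsupp.add_apply, Finsupp.single_apply]
    by_cases f0 : (0 : Fin (m+3)) = l
    · have f1 : ¬ (1 : Fin (m+3)) = l := fun hh => n01 m (f0.trans hh.symm)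
      have f2 : ¬ (2 : Fin (m+3)) = l := fun hh => n02 m (f0.trans hh.symm)
      simp only [if_pos f0, if_neg f1, if_neg f2]
      all_goals omega
    · by_cases f1 : (1 : Fin (m+3)) = l
      · have f2 : ¬ (2 : Fin (m+3)) = l := fun hh => n12 m (f1.trans hh.symm)
        simp only [if_neg f0, if_pos f1, if_neg f2]
        all_goals omega
      · by_cases f2 : (2 : Fin (m+3)) = l
        · simp only [if_neg f0, if_neg f1, if_pos f2]
          all_goals omega
        · simp only [if_neg f0, if_neg f1, if_neg f2]
          all_goals omega
  have hsubC : d - (Finsupp.single 1 1 + Finsupp.single 2 1)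
      = Finsupp.single (1 : Fin (m+3)) (k'+1) + Finsupp.single 0 1 := by
    ext l
    simp only [Finsupp.tsub_apply, hdv, Finsupp.add_apply, Finsupp.single_apply]
    by_cases f0 : (0 : Fin (m+3)) = l
    · have f1 : ¬ (1 : Fin (m+3)) = l := fun hh => n01 m (f0.trans hh.symm)
      have f2 : ¬ (2 : Fin (m+3)) = l := fun hh => n02 m (f0.trans hh.symm)
      simp only [if_pos f0, if_neg f1, if_neg f2]
      all_goals omega
    · by_cases f1 : (1 : Fin (m+3)) = l
      · have f2 : ¬ (2 : Fin (m+3)) = l := fun hh => n12 m (f1.trans hh.symm)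
        simp only [if_neg f0, if_pos f1, if_neg f2]
        all_goals omega
      · by_cases f2 : (2 : Fin (m+3)) = l
        · simp only [if_neg f0, if_neg f1, if_pos f2]
          all_goals omega
        · simp only [if_neg f0, if_neg f1, if_neg f2]
          all_goals omega
  have m01 : ((0 : Fin (m+3)), (1 : Fin (m+3))) ∈ Finset.univ.filter
      (fun q : Fin (m+3) × Fin (m+3) => q.1 < q.2) :=
    Finset.mem_filter.mpr ⟨Finset.mem_univ _, lt01 m⟩
  have m02 : ((0 : Fin (m+3)), (2 : Fin (m+3))) ∈ (Finset.univ.filter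
      (fun q : Fin (m+3) × Fin (m+3) => q.1 < q.2)).erase (0, 1) :=
    Finset.mem_erase.mpr ⟨fun hh => n21 m (congrArg Prod.snd hh),
      Finset.mem_filter.mpr ⟨Finset.mem_univ _, lt02 m⟩⟩
  have m12 : ((1 : Fin (m+3)), (2 : Fin (m+3))) ∈ ((Finset.univ.filter
      (fun q : Fin (m+3) × Fin (m+3) => q.1 < q.2)).erase (0, 1)).erase (0, 2) :=
    Finset.mem_erase.mpr ⟨fun hh => n10 m (congrArg Prod.fst hh),
      Finset.mem_erase.mpr ⟨fun hh => n10 m (congrArg Prod.fst hh),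
        Finset.mem_filter.mpr ⟨Finset.mem_univ _, lt12 m⟩⟩⟩
  rw [← Finset.add_sum_erase _ _ m01, ← Finset.add_sum_erase _ _ m02,
    ← Finset.add_sum_erase _ _ m12, Finset.sum_eq_zero]
  rotate_left
  · intro q hq
    obtain ⟨hne12, hq'⟩ := Finset.mem_erase.mp hq
    obtain ⟨hne02, hq''⟩ := Finset.mem_erase.mp hq'
    obtain ⟨hne01, hqf⟩ := Finset.mem_erase.mp hq''
    have hq12 : q.1 < q.2 := (Finset.mem_filter.mp hqf).2
    rw [if_neg]
    intro hle
    obtain ⟨ha, hc⟩ := pair_le_both q.1 q.2 d hle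
    have e1 : q.1 = 0 ∨ q.1 = 1 ∨ q.1 = 2 := by
      by_contra hq3
      push_neg at hq3
      rw [hdo q.1 (fun hh => hq3.1 hh.symm) (fun hh => hq3.2.1 hh.symm)
        (fun hh => hq3.2.2 hh.symm)] at ha
      omega
    have e2 : q.2 = 0 ∨ q.2 = 1 ∨ q.2 = 2 := by
      by_contra hq3
      push_neg at hq3
      rw [hdo q.2 (fun hh => hq3.1 hh.symm) (fun hh => hq3.2.1 hh.symm)
        (fun hh => hq3.2.2 hh.symm)] at hc
      omega
    obtain ⟨a1, a2⟩ := q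
    simp only at e1 e2 hq12 hne01 hne02 hne12
    rcases e1 with rfl | rfl | rfl <;> rcases e2 with rfl | rfl | rfl
    · exact lt_irrefl _ hq12
    · exact hne01 rfl
    · exact hne02 rfl
    · exact nlt10 m hq12
    · exact lt_irrefl _ hq12
    · exact hne12 rfl
    · exact nlt20 m hq12
    · exact nlt21 m hq12
    · exact lt_irrefl _ hq12
  rw [if_pos (pair_le_of 0 1 (n01 m) d (by omega) (by omega)), hsubA, if_pos h3,
    if_pos (pair_le_of 0 2 (n02 m) d (by omega) (by omega)), hsubB, if_pos h1,
    if_pos (pair_le_of 1 2 (n12 m) d (by omega) (by omega)), hsubC, if_pos h2]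
  ring

lemma coeff_prod_d3 (m k' : ℕ) (b : ℝ) (S : Finset (Fin (m+3) →₀ ℕ))
    (h1 : Finsupp.single (1 : Fin (m+3)) (k'+2) ∈ S)
    (h3 : Finsupp.single (1 : Fin (m+3)) (k'+1) + Finsupp.single 2 1 ∈ S)
    (h6 : Finsupp.single (1 : Fin (m+3)) k' + Finsupp.single 2 2 ∈ S) :
    (pAux (m+2) b * ∑ mu ∈ S, monomial mu (1:ℝ)).coeff
      (Finsupp.single 1 (k'+2) + Finsupp.single 2 2) = b + 2 := by
  set d : Fin (m+3) →₀ ℕ := Finsupp.single 1 (k'+2) + Finsupp.single 2 2 with hd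
  have hdv : ∀ l, d l = (if (1 : Fin (m+3)) = l then k'+2 else 0)
      + (if (2 : Fin (m+3)) = l then 2 else 0) := by
    intro l
    rw [hd, Finsupp.add_apply, Finsupp.single_apply, Finsupp.single_apply]
  have hd0 : d 0 = 0 := by
    rw [hdv 0, if_neg (n10 m), if_neg (n20 m)]
  have hd1 : d 1 = k'+2 := by
    rw [hdv 1, if_neg (n21 m)]
    simp
  have hd2 : d 2 = 2 := by
    rw [hdv 2, if_neg (n12 m)]
    simp
  have hdo : ∀ l, ¬ (1 : Fin (m+3)) = l → ¬ (2 : Fin (m+3)) = l → d l = 0 := by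
    intro l f1 f2
    rw [hdv l, if_neg f1, if_neg f2]
  rw [coeff_pAux_mul]
  simp only [coeff_qAux]
  -- part 1 : zero
  rw [if_neg (fun hle => by
    have h7 := Finsupp.single_le_iff.mp hle
    rw [hd0] at h7
    omega)]
  -- part 2 : two terms
  have hsub1 : d - Finsupp.single 1 2
      = Finsupp.single (1 : Fin (m+3)) k' + Finsupp.single 2 2 := by
    ext l
    simp only [Finsupp.tsub_apply, hdv, Finsupp.add_apply, Finsupp.single_apply]
    by_cases f1 : (1 : Fin (m+3)) = l
    · have f2 : ¬ (2 : Fin (m+3)) = l := fun hh => n12 m (f1.trans hh.symm)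
      simp only [if_pos f1, if_neg f2]
      all_goals omega
    · by_cases f2 : (2 : Fin (m+3)) = l
      · simp only [if_neg f1, if_pos f2]
        all_goals omega
      · simp only [if_neg f1, if_neg f2]
        all_goals omega
  have hsub2 : d - Finsupp.single 2 2 = Finsupp.single (1 : Fin (m+3)) (k'+2) := by
    ext l
    simp only [Finsupp.tsub_apply, hdv, Finsupp.add_apply, Finsupp.single_apply]
    by_cases f1 : (1 : Fin (m+3)) = l
    · have f2 : ¬ (2 : Fin (m+3)) = l := fun hh => n12 m (f1.trans hh.symm)
      simp only [if_pos f1, if_neg f2]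
      all_goals omega
    · by_cases f2 : (2 : Fin (m+3)) = l
      · simp only [if_neg f1, if_pos f2]
        all_goals omega
      · simp only [if_neg f1, if_neg f2]
        all_goals omega
  have u0 : (0 : Fin (m+2)) ∈ (Finset.univ : Finset (Fin (m+2))) := Finset.mem_univ _
  have u1 : (1 : Fin (m+2)) ∈ (Finset.univ : Finset (Fin (m+2))).erase 0 := by
    refine Finset.mem_erase.mpr ⟨?_, Finset.mem_univ _⟩
    have a : ((1 : Fin (m+2)) : ℕ) = 1 := Fin.val_one _
    intro hh
    rw [Fin.ext_iff, a] at hh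
    simp at hh
  rw [← Finset.add_sum_erase _ _ u0, ← Finset.add_sum_erase _ _ u1, Finset.sum_eq_zero]
  rotate_left
  · intro i' hi'
    obtain ⟨hne1, hi''⟩ := Finset.mem_erase.mp hi'
    obtain ⟨hne0, _⟩ := Finset.mem_erase.mp hi''
    rw [if_neg]
    intro hle
    have hcoord := Finsupp.single_le_iff.mp hle
    have hz : d i'.succ = 0 := by
      refine hdo i'.succ (fun hh => hne0 (Fin.succ_injective _ (hh.symm.trans (s0 m).symm)))
        (fun hh => hne1 (Fin.succ_injective _ (hh.symm.trans (s1 m).symm)))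
    omega
  rw [s0 m, s1 m, if_pos (Finsupp.single_le_iff.mpr (by rw [hd1]; omega)), hsub1, if_pos h6,
    if_pos (Finsupp.single_le_iff.mpr (le_of_eq hd2.symm)), hsub2, if_pos h1]
  -- part 3 : one pair
  have hsub3 : d - (Finsupp.single 1 1 + Finsupp.single 2 1)
      = Finsupp.single (1 : Fin (m+3)) (k'+1) + Finsupp.single 2 1 := by
    ext l
    simp only [Finsupp.tsub_apply, hdv, Finsupp.add_apply, Finsupp.single_apply]
    by_cases f1 : (1 : Fin (m+3)) = l
    · have f2 : ¬ (2 : Fin (m+3)) = l := fun hh => n12 m (f1.trans hh.symm)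
      simp only [if_pos f1, if_neg f2]
      all_goals omega
    · by_cases f2 : (2 : Fin (m+3)) = l
      · simp only [if_neg f1, if_pos f2]
        all_goals omega
      · simp only [if_neg f1, if_neg f2]
        all_goals omega
  rw [Finset.sum_eq_single ((1 : Fin (m+3)), (2 : Fin (m+3)))]
  rotate_left
  · rintro ⟨q1, q2⟩ hq hqne
    have hq12 : q1 < q2 := (Finset.mem_filter.mp hq).2
    rw [if_neg]
    intro hle
    obtain ⟨ha, hc⟩ := pair_le_both q1 q2 d hle
    have e1 : q1 = 1 ∨ q1 = 2 := by
      by_contra hq'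
      push_neg at hq'
      rw [hdo q1 (fun hh => hq'.1 hh.symm) (fun hh => hq'.2 hh.symm)] at ha
      omega
    have e2 : q2 = 1 ∨ q2 = 2 := by
      by_contra hq'
      push_neg at hq'
      rw [hdo q2 (fun hh => hq'.1 hh.symm) (fun hh => hq'.2 hh.symm)] at hc
      omega
    rcases e1 with rfl | rfl <;> rcases e2 with rfl | rfl
    · exact lt_irrefl _ hq12
    · exact hqne rfl
    · exact nlt21 m hq12
    · exact lt_irrefl _ hq12
  · intro hmm
    exact absurd (Finset.mem_filter.mpr
      ⟨Finset.mem_univ (((1 : Fin (m+3)), (2 : Fin (m+3))) : Fin (m+3) × Fin (m+3)),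
        lt12 m⟩) hmm
  rw [if_pos (pair_le_of 1 2 (n12 m) d (by omega) (by omega)), hsub3, if_pos h3]
  ring

/-- For `b ≥ 13/2`, the ADLC polynomial
`p = b²x_0² + ∑_{i=1}^n x_i² + b ∑_{i<j} x_i x_j` and the ADLC polynomial
`q_S = ∑_{μ ∈ S} x^μ` (for `S` M-convex, homogeneous of degree `k`, containing
the six listed exponents) have a non-ADLC product: the coefficients of
`x_1^k x_0²`, `x_1^k x_0 x_2`, `x_1^k x_2²` in `p·q_S` are `b²+b+1`, `3b+1`,
`b+2`, and `(3b+1)² < (b+2)(b²+b+1)`. -/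
theorem product_of_ADLC_not_ADLC (n k : ℕ) (hn : 2 ≤ n) (hk : 2 ≤ k)
    (b : ℝ) (hb : 13 / 2 ≤ b)
    (S : Finset (Fin (n + 1) →₀ ℕ))
    (hSdeg : ∀ mu ∈ S, ∑ i, mu i = k)
    (hS1 : Finsupp.single (1 : Fin (n + 1)) k ∈ S)
    (hS2 : Finsupp.single (1 : Fin (n + 1)) (k - 1) + Finsupp.single 0 1 ∈ S)
    (hS3 : Finsupp.single (1 : Fin (n + 1)) (k - 1) + Finsupp.single 2 1 ∈ S)
    (hS4 : Finsupp.single (1 : Fin (n + 1)) (k - 2) + Finsupp.single 0 2 ∈ S)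
    (hS5 : Finsupp.single (1 : Fin (n + 1)) (k - 2) + Finsupp.single 0 1
            + Finsupp.single 2 1 ∈ S)
    (hS6 : Finsupp.single (1 : Fin (n + 1)) (k - 2) + Finsupp.single 2 2 ∈ S)
    (hM : MConvex S) :
    let p : MvPolynomial (Fin (n + 1)) ℝ :=
      C (b ^ 2) * X 0 ^ 2 + (∑ i : Fin n, X i.succ ^ 2) +
        C b * ∑ q ∈ Finset.univ.filter
          (fun q : Fin (n + 1) × Fin (n + 1) => q.1 < q.2), X q.1 * X q.2
    let qS : MvPolynomial (Fin (n + 1)) ℝ := ∑ mu ∈ S, monomial mu (1 : ℝ)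
    ADLC p ∧ ADLC qS ∧ ¬ ADLC (p * qS) ∧
    (p * qS).coeff (Finsupp.single 1 k + Finsupp.single 0 2) = b ^ 2 + b + 1 ∧
    (p * qS).coeff (Finsupp.single 1 k + Finsupp.single 0 1 + Finsupp.single 2 1)
      = 3 * b + 1 ∧
    (p * qS).coeff (Finsupp.single 1 k + Finsupp.single 2 2) = b + 2 ∧
    (3 * b + 1) ^ 2 < (b + 2) * (b ^ 2 + b + 1) := by
  obtain ⟨m, rfl⟩ : ∃ m, n = m + 2 := ⟨n - 2, by omega⟩
  obtain ⟨k', rfl⟩ : ∃ k', k = k' + 2 := ⟨k - 2, by omega⟩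
  intro p qS
  have hb1 : (1 : ℝ) ≤ b := by linarith
  have c1 : (p * qS).coeff (Finsupp.single 1 (k' + 2) + Finsupp.single 0 2)
      = b ^ 2 + b + 1 := coeff_prod_d1 m k' b S hS1 hS2 hS4
  have c2 : (p * qS).coeff (Finsupp.single 1 (k' + 2) + Finsupp.single 0 1
      + Finsupp.single 2 1) = 3 * b + 1 := coeff_prod_d2 m k' b S hS1 hS2 hS3 hS5
  have c3 : (p * qS).coeff (Finsupp.single 1 (k' + 2) + Finsupp.single 2 2)
      = b + 2 := coeff_prod_d3 m k' b S hS1 hS3 hS6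
  have hineq : (3 * b + 1) ^ 2 < (b + 2) * (b ^ 2 + b + 1) := by
    nlinarith [sq_nonneg (b - 13/2), mul_nonneg (mul_nonneg (by linarith : (0:ℝ) ≤ b - 13/2)
      (by linarith : (0:ℝ) ≤ b - 13/2)) (by linarith : (0:ℝ) ≤ b - 13/2)]
  refine ⟨ADLC_pAux (m + 2) b hb1, ADLC_qAux S hM, ?_, c1, c2, c3, hineq⟩
  intro hA
  set F : Fin (m + 3) →₀ ℕ :=
    Finsupp.single 1 (k' + 2) + Finsupp.single 0 1 + Finsupp.single 2 1 with hF
  have hFv : ∀ l, F l = ((if (1 : Fin (m+3)) = l then k'+2 else 0)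
      + (if (0 : Fin (m+3)) = l then 1 else 0))
      + (if (2 : Fin (m+3)) = l then 1 else 0) := by
    intro l
    rw [hF, Finsupp.add_apply, Finsupp.add_apply, Finsupp.single_apply,
      Finsupp.single_apply, Finsupp.single_apply]
  have h := hA (fun l => F l) 0 2
  have cA : ∀ l, ((fun kk => ((F kk : ℕ) : ℤ)) + Pi.single 0 1 - Pi.single 2 1
      : Fin (m + 3) → ℤ) l
      = (((Finsupp.single 1 (k'+2) + Finsupp.single 0 2 : Fin (m+3) →₀ ℕ)) l : ℤ) := by
    intro l
    simp only [Pi.add_apply, Pi.sub_apply, Pi.single_apply, Finsupp.add_apply,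
      Finsupp.single_apply, hFv]
    by_cases f0 : (0 : Fin (m+3)) = l
    · have f1 : ¬ (1 : Fin (m+3)) = l := fun hh => n01 m (f0.trans hh.symm)
      have f2 : ¬ (2 : Fin (m+3)) = l := fun hh => n02 m (f0.trans hh.symm)
      have g2 : ¬ l = 2 := fun hh => f2 hh.symm
      simp only [if_pos f0, if_pos f0.symm, if_neg f1, if_neg f2, if_neg g2]
      all_goals omega
    · have g0 : ¬ l = 0 := fun hh => f0 hh.symm
      by_cases f1 : (1 : Fin (m+3)) = l
      · have f2 : ¬ (2 : Fin (m+3)) = l := fun hh => n12 m (f1.trans hh.symm)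
        have g2 : ¬ l = 2 := fun hh => f2 hh.symm
        simp only [if_neg f0, if_neg g0, if_pos f1, if_neg f2, if_neg g2]
        all_goals omega
      · by_cases f2 : (2 : Fin (m+3)) = l
        · simp only [if_neg f0, if_neg g0, if_neg f1, if_pos f2, if_pos f2.symm]
          all_goals omega
        · have g2 : ¬ l = 2 := fun hh => f2 hh.symm
          simp only [if_neg f0, if_neg g0, if_neg f1, if_neg f2, if_neg g2]
          all_goals omega
  have cB : ∀ l, ((fun kk => ((F kk : ℕ) : ℤ)) - Pi.single 0 1 + Pi.single 2 1
      : Fin (m + 3) → ℤ) l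
      = (((Finsupp.single 1 (k'+2) + Finsupp.single 2 2 : Fin (m+3) →₀ ℕ)) l : ℤ) := by
    intro l
    simp only [Pi.add_apply, Pi.sub_apply, Pi.single_apply, Finsupp.add_apply,
      Finsupp.single_apply, hFv]
    by_cases f0 : (0 : Fin (m+3)) = l
    · have f1 : ¬ (1 : Fin (m+3)) = l := fun hh => n01 m (f0.trans hh.symm)
      have f2 : ¬ (2 : Fin (m+3)) = l := fun hh => n02 m (f0.trans hh.symm)
      have g2 : ¬ l = 2 := fun hh => f2 hh.symm
      simp only [if_pos f0, if_pos f0.symm, if_neg f1, if_neg f2, if_neg g2]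
      all_goals omega
    · have g0 : ¬ l = 0 := fun hh => f0 hh.symm
      by_cases f1 : (1 : Fin (m+3)) = l
      · have f2 : ¬ (2 : Fin (m+3)) = l := fun hh => n12 m (f1.trans hh.symm)
        have g2 : ¬ l = 2 := fun hh => f2 hh.symm
        simp only [if_neg f0, if_neg g0, if_pos f1, if_neg f2, if_neg g2]
        all_goals omega
      · by_cases f2 : (2 : Fin (m+3)) = l
        · simp only [if_neg f0, if_neg g0, if_neg f1, if_pos f2, if_pos f2.symm]
          all_goals omega
        · have g2 : ¬ l = 2 := fun hh => f2 hh.symm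
          simp only [if_neg f0, if_neg g0, if_neg f1, if_neg f2, if_neg g2]
          all_goals omega
  rw [coeffZ_eq_coeff _ _ _ cA, coeffZ_eq_coeff _ _ _ cB,
    Finsupp.equivFunOnFinite_symm_coe, c1, c3] at h
  nlinarith [h, c2, hineq]
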